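/- arXiv:1302.4218 — 2 statements merged into one kernel-verified Lean document; each statement's English description precedes it below -/
import Mathlib

section
/- There exist constants ε₀ > 0 and C > 0 such that for every ε ∈ (0, ε₀] and every z ∈ ℂ² with |z - 2i e₁| < 2ε (where e₁ = (1,0)), there exist ζ, η ∈ ℂ² with ζ·ζ = 0, η·η = 0, z = ζ + η, |ζ - γ| ≤ Cε and |η + γ̄| ≤ Cε, where γ = (i,1). -/
lemma coord_le_norm (w : EuclideanSpace ℂ (Fin 2)) (i : Fin 2) : ‖w i‖ ≤ ‖w‖ := by
  rw [EuclideanSpace.norm_eq]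
  refine (Real.le_sqrt (norm_nonneg _) (by positivity)).2 ?_
  calc ‖w i‖ ^ 2 ≤ ∑ j, ‖w j‖ ^ 2 :=
        Finset.single_le_sum (f := fun j => ‖w j‖ ^ 2) (fun j _ => by positivity)
          (Finset.mem_univ i)
    _ = _ := by norm_num

theorem stmt_5 (γ γbar ctr : EuclideanSpace ℂ (Fin 2))
    (hγ : γ 0 = Complex.I ∧ γ 1 = 1)
    (hγbar : γbar 0 = -Complex.I ∧ γbar 1 = 1)
    (hctr : ctr 0 = 2 * Complex.I ∧ ctr 1 = 0) :  -- ctr = 2i e₁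
    ∃ ε₀ > (0:ℝ), ∃ C > (0:ℝ), ∀ ε : ℝ, 0 < ε → ε ≤ ε₀ →
      ∀ z : EuclideanSpace ℂ (Fin 2), ‖z - ctr‖ < 2 * ε →
        ∃ ζ η : EuclideanSpace ℂ (Fin 2),
          ζ 0 ^ 2 + ζ 1 ^ 2 = 0 ∧ η 0 ^ 2 + η 1 ^ 2 = 0 ∧
          z = ζ + η ∧ ‖ζ - γ‖ ≤ C * ε ∧ ‖η + γbar‖ ≤ C * ε := by
  refine ⟨1, one_pos, 4, by norm_num, fun ε hε hε1 z hz => ?_⟩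
  set a : ℂ := (-Complex.I * z 0 + z 1) / 2 with ha
  set b : ℂ := (-Complex.I * z 0 - z 1) / 2 with hb
  refine ⟨a • γ, (-b) • γbar, ?_, ?_, ?_, ?_, ?_⟩
  · show (a * γ 0) ^ 2 + (a * γ 1) ^ 2 = 0
    rw [hγ.1, hγ.2]
    linear_combination a ^ 2 * Complex.I_sq
  · show (-b * γbar 0) ^ 2 + (-b * γbar 1) ^ 2 = 0
    rw [hγbar.1, hγbar.2]
    linear_combination b ^ 2 * Complex.I_sq
  · ext i
    fin_cases i
    · show z 0 = a * γ 0 + -b * γbar 0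
      rw [hγ.1, hγbar.1]
      linear_combination (-Complex.I) * ha + (-Complex.I) * hb + (z 0) * Complex.I_sq
    · show z 1 = a * γ 1 + -b * γbar 1
      rw [hγ.2, hγbar.2]
      linear_combination ha - hb
  · -- ‖a•γ - γ‖ ≤ 4ε
    have h1 : a • γ - γ = (a - 1) • γ := by rw [sub_smul, one_smul]
    have ha1 : a - 1 = (-Complex.I * ((z - ctr) 0) + ((z - ctr) 1)) / 2 := by
      show _ = (-Complex.I * (z 0 - ctr 0) + (z 1 - ctr 1)) / 2
      rw [hctr.1, hctr.2]
      linear_combination ha + (-1:ℂ) * Complex.I_sq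
    have hbound : ‖a - 1‖ ≤ ‖z - ctr‖ := by
      rw [ha1]
      calc ‖(-Complex.I * ((z - ctr) 0) + ((z - ctr) 1)) / 2‖
          ≤ (‖(z - ctr) 0‖ + ‖(z - ctr) 1‖) / 2 := by
            rw [norm_div]
            gcongr ?_ / ?_
            · refine (norm_add_le _ _).trans ?_
              rw [norm_mul, norm_neg, Complex.norm_I, one_mul]
            · simp
        _ ≤ (‖z - ctr‖ + ‖z - ctr‖) / 2 := by
            gcongr <;> exact coord_le_norm _ _
        _ = ‖z - ctr‖ := by ring
    have hγn : ‖γ‖ ≤ 2 := by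
      rw [EuclideanSpace.norm_eq]
      rw [show ∑ i, ‖γ i‖ ^ 2 = ‖γ 0‖^2 + ‖γ 1‖^2 by norm_num [Fin.sum_univ_two]]
      rw [hγ.1, hγ.2]
      simp
      rw [show (2:ℝ) = Real.sqrt 4 by rw [show (4:ℝ) = 2^2 by norm_num, Real.sqrt_sq]; norm_num]
      exact Real.sqrt_le_sqrt (by norm_num)
    calc ‖a • γ - γ‖ = ‖a - 1‖ * ‖γ‖ := by rw [h1, norm_smul]
      _ ≤ ‖z - ctr‖ * 2 := by gcongr
      _ ≤ (2 * ε) * 2 := by gcongr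
      _ = 4 * ε := by ring
  · have h1 : (-b) • γbar + γbar = (1 - b) • γbar := by
      module
    have hb1 : 1 - b = (Complex.I * ((z - ctr) 0) + ((z - ctr) 1)) / 2 := by
      show _ = (Complex.I * (z 0 - ctr 0) + (z 1 - ctr 1)) / 2
      rw [hctr.1, hctr.2]
      linear_combination (-1:ℂ) * hb + Complex.I_sq
    have hbound : ‖(1:ℂ) - b‖ ≤ ‖z - ctr‖ := by
      rw [hb1]
      calc ‖(Complex.I * ((z - ctr) 0) + ((z - ctr) 1)) / 2‖
          ≤ (‖(z - ctr) 0‖ + ‖(z - ctr) 1‖) / 2 := by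
            rw [norm_div]
            gcongr ?_ / ?_
            · refine (norm_add_le _ _).trans ?_
              rw [norm_mul, Complex.norm_I, one_mul]
            · simp
        _ ≤ (‖z - ctr‖ + ‖z - ctr‖) / 2 := by
            gcongr <;> exact coord_le_norm _ _
        _ = ‖z - ctr‖ := by ring
    have hγn : ‖γbar‖ ≤ 2 := by
      rw [EuclideanSpace.norm_eq]
      rw [show ∑ i, ‖γbar i‖ ^ 2 = ‖γbar 0‖^2 + ‖γbar 1‖^2 by norm_num [Fin.sum_univ_two]]
      rw [hγbar.1, hγbar.2]
      simp
      rw [show (2:ℝ) = Real.sqrt 4 by rw [show (4:ℝ) = 2^2 by norm_num, Real.sqrt_sq]; norm_num]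
      exact Real.sqrt_le_sqrt (by norm_num)
    calc ‖(-b) • γbar + γbar‖ = ‖(1:ℂ) - b‖ * ‖γbar‖ := by rw [h1, norm_smul]
      _ ≤ ‖z - ctr‖ * 2 := by gcongr
      _ ≤ (2 * ε) * 2 := by gcongr
      _ = 4 * ε := by ring
end

section
/- Let f ∈ L^∞(ℝⁿ) have compact support contained in the half-space {x : x₁ ≤ 0}, and let Tf(z) = ∫ exp(-(z-y)·(z-y)/(2h)) f(y) dy. Then for every z = x + iξ ∈ ℂⁿ with Re z₁ = x₁ ≥ 0, one has |Tf(z)| ≤ (2πh)^{n/2} exp((|ξ|² - x₁²)/(2h)) ‖f‖_{L^∞}. -/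
open MeasureTheory

theorem stmt_7 (n : ℕ) [NeZero n] (h : ℝ) (hh : 0 < h)
    (f : EuclideanSpace ℝ (Fin n) → ℂ) (hf : Measurable f) (hsupp : HasCompactSupport f)
    (hhalf : ∀ y, 0 < y 0 → f y = 0)  -- f is supported in {y : y₁ ≤ 0}
    (M : ℝ) (hM : ∀ y, ‖f y‖ ≤ M)
    (T : (Fin n → ℂ) → ℂ)
    (hT : ∀ z, T z = ∫ y : EuclideanSpace ℝ (Fin n),
        Complex.exp (-(∑ j, (z j - (y j : ℂ)) ^ 2) / (2 * (h : ℂ))) * f y) :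
    ∀ z : Fin n → ℂ, 0 ≤ (z 0).re →
      ‖T z‖ ≤ (2 * Real.pi * h) ^ ((n : ℝ) / 2) *
        Real.exp (((∑ j, (z j).im ^ 2) - (z 0).re ^ 2) / (2 * h)) * M := by
  intro z hz
  have hM0 : 0 ≤ M := le_trans (norm_nonneg _) (hM 0)
  set b : ℝ := 1 / (2 * h) with hbdef
  have hbpos : 0 < b := by positivity
  set C : ℝ := Real.exp (((∑ j, (z j).im ^ 2) - (z 0).re ^ 2) / (2 * h)) with hC
  set x' : EuclideanSpace ℝ (Fin n) := WithLp.toLp 2 (fun j => if j = 0 then 0 else (z j).re) with hx'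
  -- pointwise bound
  have key : ∀ y : EuclideanSpace ℝ (Fin n),
      ‖Complex.exp (-(∑ j, (z j - (y j : ℂ)) ^ 2) / (2 * (h : ℂ))) * f y‖ ≤
      M * C * Real.exp (-b * ‖y - x'‖ ^ 2) := by
    intro y
    have hre : (-(∑ j, (z j - (y j : ℂ)) ^ 2) / (2 * (h : ℂ))).re
        = ((∑ j, (z j).im ^ 2) - ∑ j, ((z j).re - y j) ^ 2) / (2 * h) := by
      rw [show (2 * (h : ℂ)) = ((2 * h : ℝ) : ℂ) by push_cast; ring,
        Complex.div_ofReal_re, Complex.neg_re, Complex.re_sum]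
      congr 1
      rw [← Finset.sum_sub_distrib, ← Finset.sum_neg_distrib]
      refine Finset.sum_congr rfl fun j _ => ?_
      simp [pow_two, Complex.mul_re]
    rw [norm_mul, Complex.norm_exp, hre]
    by_cases hfy : f y = 0
    · rw [hfy, norm_zero, mul_zero]
      positivity
    · have hy0 : y 0 ≤ 0 := by
        by_contra hy; exact hfy (hhalf y (lt_of_not_ge hy))
      have hnorm : ‖y - x'‖ ^ 2 = ∑ j, (y j - x' j) ^ 2 := by
        rw [EuclideanSpace.norm_eq, Real.sq_sqrt (by positivity)]
        refine Finset.sum_congr rfl fun j _ => ?_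
        simp [PiLp.sub_apply, sq_abs]
      have hsum : (z 0).re ^ 2 + ∑ j, (y j - x' j) ^ 2 ≤ ∑ j, ((z j).re - y j) ^ 2 := by
        have step : ∀ j ∈ Finset.univ,
            (y j - x' j) ^ 2 + (if j = 0 then (z 0).re ^ 2 else 0) ≤ ((z j).re - y j) ^ 2 := by
          intro j _
          rcases eq_or_ne j 0 with rfl | hj
          · have hx0 : x' 0 = 0 := by simp [hx']
            rw [if_pos rfl, hx0]
            nlinarith [mul_nonneg hz (neg_nonneg.2 hy0)]
          · have hxj : x' j = (z j).re := by simp [hx', hj]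
            rw [if_neg hj, add_zero, hxj]
            exact le_of_eq (by ring)
        calc (z 0).re ^ 2 + ∑ j, (y j - x' j) ^ 2
            = ∑ j, ((y j - x' j) ^ 2 + if j = 0 then (z 0).re ^ 2 else 0) := by
              rw [Finset.sum_add_distrib, Finset.sum_ite_eq' Finset.univ 0
                (fun _ => (z 0).re ^ 2)]
              simp [add_comm]
          _ ≤ ∑ j, ((z j).re - y j) ^ 2 := Finset.sum_le_sum step
      have hexp : ((∑ j, (z j).im ^ 2) - ∑ j, ((z j).re - y j) ^ 2) / (2 * h)
          ≤ (((∑ j, (z j).im ^ 2) - (z 0).re ^ 2) / (2 * h)) + (-b * ‖y - x'‖ ^ 2) := by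
        rw [hnorm, hbdef]
        rw [show (((∑ j, (z j).im ^ 2) - (z 0).re ^ 2) / (2 * h))
            + (-(1 / (2 * h)) * ∑ j, (y j - x' j) ^ 2)
            = ((∑ j, (z j).im ^ 2) - ((z 0).re ^ 2 + ∑ j, (y j - x' j) ^ 2)) / (2 * h) by ring]
        gcongr
      calc Real.exp (((∑ j, (z j).im ^ 2) - ∑ j, ((z j).re - y j) ^ 2) / (2 * h)) * ‖f y‖
          ≤ Real.exp ((((∑ j, (z j).im ^ 2) - (z 0).re ^ 2) / (2 * h))
              + (-b * ‖y - x'‖ ^ 2)) * M := by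
            exact mul_le_mul (Real.exp_le_exp.2 hexp) (hM y) (norm_nonneg _)
              (Real.exp_pos _).le
        _ = M * C * Real.exp (-b * ‖y - x'‖ ^ 2) := by
            rw [Real.exp_add, hC]; ring
  -- integrability of the bound
  have hgauss : Integrable (fun v : EuclideanSpace ℝ (Fin n) => Real.exp (-b * ‖v‖ ^ 2)) := by
    have := (GaussianFourier.integrable_cexp_neg_mul_sq_norm_add
      (V := EuclideanSpace ℝ (Fin n)) (b := (b : ℂ)) (by simpa using hbpos) 0 0).norm
    refine this.congr ?_
    filter_upwards with v
    simp [Complex.norm_exp]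
    exact Or.inl (by norm_cast)
  have hint : Integrable (fun y : EuclideanSpace ℝ (Fin n) =>
      M * C * Real.exp (-b * ‖y - x'‖ ^ 2)) :=
    (hgauss.comp_sub_right x').const_mul _
  -- main estimate
  rw [hT]
  calc ‖∫ y : EuclideanSpace ℝ (Fin n),
        Complex.exp (-(∑ j, (z j - (y j : ℂ)) ^ 2) / (2 * (h : ℂ))) * f y‖
      ≤ ∫ y : EuclideanSpace ℝ (Fin n),
        ‖Complex.exp (-(∑ j, (z j - (y j : ℂ)) ^ 2) / (2 * (h : ℂ))) * f y‖ :=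
        norm_integral_le_integral_norm _
    _ ≤ ∫ y : EuclideanSpace ℝ (Fin n), M * C * Real.exp (-b * ‖y - x'‖ ^ 2) := by
        refine integral_mono_of_nonneg ?_ hint ?_
        · filter_upwards with y using norm_nonneg _
        · filter_upwards with y using key y
    _ = M * C * ∫ y : EuclideanSpace ℝ (Fin n), Real.exp (-b * ‖y - x'‖ ^ 2) := by
        rw [integral_const_mul]
    _ = M * C * ∫ y : EuclideanSpace ℝ (Fin n), Real.exp (-b * ‖y‖ ^ 2) := by
        rw [integral_sub_right_eq_self (fun y : EuclideanSpace ℝ (Fin n) =>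
          Real.exp (-b * ‖y‖ ^ 2)) x']
    _ = M * C * (Real.pi / b) ^ ((n : ℝ) / 2) := by
        rw [GaussianFourier.integral_rexp_neg_mul_sq_norm hbpos]
        norm_num
    _ = (2 * Real.pi * h) ^ ((n : ℝ) / 2) * C * M := by
        rw [show Real.pi / b = 2 * Real.pi * h by rw [hbdef]; field_simp]
        ring
end
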